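/- arXiv:1811.07452 — 2 statements merged into one kernel-verified Lean document; each statement's English description precedes it below -/
import Mathlib

section
/- Let R be a nonnegative random variable with E[R] > 0 and E[R²] < ∞, and let a, b > 0 be constants. Define g(λ) = E[(R - λa)⁺] and h(λ) = λb. Then there exists a unique λ* > 0 such that g(λ*) = h(λ*). -/
open MeasureTheory

theorem stmt_0 {Ω : Type*} [MeasurableSpace Ω] (μ : Measure Ω) [IsProbabilityMeasure μ]
    (R : Ω → ℝ) (hRmeas : Measurable R) (hR0 : ∀ ω, 0 ≤ R ω)
    (hRint : Integrable R μ) (hR2 : Integrable (fun ω => R ω ^ 2) μ)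
    (hmean : 0 < ∫ ω, R ω ∂μ)
    (a b : ℝ) (ha : 0 < a) (hb : 0 < b) :
    ∃! l : ℝ, 0 < l ∧ ∫ ω, max (R ω - l * a) 0 ∂μ = l * b := by
  set G : ℝ → ℝ := fun l => ∫ ω, max (R ω - l * a) 0 ∂μ with hGdef
  have hint : ∀ l : ℝ, Integrable (fun ω => max (R ω - l * a) 0) μ := fun l =>
    (hRint.sub (integrable_const (l * a))).pos_part
  have hanti : Antitone G := by
    intro l₁ l₂ h
    apply integral_mono (hint l₂) (hint l₁)
    intro ω
    exact max_le_max (sub_le_sub_left (mul_le_mul_of_nonneg_right h ha.le) _) le_rfl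
  have hlip : ∀ x y : ℝ, dist (G x) (G y) ≤ a * dist x y := by
    intro x y
    rw [Real.dist_eq, Real.dist_eq]
    have hsub : G x - G y = ∫ ω, (max (R ω - x * a) 0 - max (R ω - y * a) 0) ∂μ := by
      rw [integral_sub (hint x) (hint y)]
    calc |G x - G y| = |∫ ω, (max (R ω - x * a) 0 - max (R ω - y * a) 0) ∂μ| := by rw [hsub]
      _ ≤ ∫ ω, |max (R ω - x * a) 0 - max (R ω - y * a) 0| ∂μ := by
          simpa [Real.norm_eq_abs] using
            norm_integral_le_integral_norm (fun ω => max (R ω - x * a) 0 - max (R ω - y * a) 0) (μ := μ)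
      _ ≤ ∫ _ω, a * |x - y| ∂μ := by
          apply integral_mono ((hint x).sub (hint y)).abs (integrable_const _)
          intro ω
          calc |max (R ω - x * a) 0 - max (R ω - y * a) 0|
              ≤ |(R ω - x * a) - (R ω - y * a)| := abs_max_sub_max_le_abs _ _ _
            _ = a * |x - y| := by
                rw [show (R ω - x * a) - (R ω - y * a) = a * (y - x) by ring, abs_mul,
                  abs_of_pos ha, abs_sub_comm]
      _ = a * |x - y| := by rw [integral_const]; simp
  have hcont : Continuous G := by
    have : LipschitzWith a.toNNReal G := by
      apply LipschitzWith.of_dist_le_mul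
      intro x y
      rw [Real.coe_toNNReal a ha.le]
      exact hlip x y
    exact this.continuous
  have hG0 : G 0 = ∫ ω, R ω ∂μ := by
    simp only [hGdef, zero_mul, sub_zero]
    exact integral_congr_ae (Filter.Eventually.of_forall fun ω => max_eq_left (hR0 ω))
  set M : ℝ := ∫ ω, R ω ∂μ with hM
  set L : ℝ := M / b + 1 with hL
  have hLpos : 0 < L := by positivity
  have hGL : G L < L * b := by
    have h1 : G L ≤ M := hG0 ▸ hanti hLpos.le
    have h2 : L * b = M + b := by rw [hL]; field_simp
    linarith
  -- IVT on f l = G l - l * b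
  set f : ℝ → ℝ := fun l => G l - l * b with hf
  have hfc : Continuous f := hcont.sub (continuous_id.mul continuous_const)
  have hf0 : 0 < f 0 := by simpa [hf, hG0] using hmean
  have hfL : f L < 0 := by simpa [hf] using hGL
  have hmem : (0 : ℝ) ∈ Set.Icc (f L) (f 0) := ⟨hfL.le, hf0.le⟩
  have := intermediate_value_Icc' hLpos.le hfc.continuousOn hmem
  obtain ⟨l, hlmem, hlz⟩ := this
  have hlpos : 0 < l := by
    rcases lt_or_eq_of_le hlmem.1 with h | h
    · exact h
    · exfalso; rw [← h] at hlz; rw [hlz] at hf0; exact lt_irrefl _ hf0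
  have hleq : G l = l * b := by
    have : G l - l * b = 0 := hlz
    linarith
  refine ⟨l, ⟨hlpos, hleq⟩, ?_⟩
  rintro y ⟨hypos, hyeq⟩
  have hyeq' : G y = y * b := hyeq
  by_contra hne
  rcases lt_or_gt_of_ne hne with h | h
  · have h1 : G l ≤ G y := hanti h.le
    rw [hleq, hyeq'] at h1
    nlinarith
  · have h1 : G y ≤ G l := hanti h.le
    rw [hleq, hyeq'] at h1
    nlinarith
end

section
/- Let (Rₙ) be i.i.d. nonnegative integrable, ρ ≥ 0 with p = P(R₁ ≥ ρ) > 0, N = min{n : Rₙ ≥ ρ}, and constants η > 0, a > 0. Then the ratio E[R_N] / (η·E[N] + a) equals E[R₁·1_{R₁≥ρ}] / (η + a·p). -/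
open MeasureTheory
open scoped ENNReal NNReal

set_option maxHeartbeats 1000000

theorem stmt_14 {Ω : Type*} [MeasurableSpace Ω] (μ : Measure Ω) [IsProbabilityMeasure μ]
    (R : ℕ → Ω → ℝ) (hmeas : ∀ i, Measurable (R i))
    (hR0 : ∀ i ω, 0 ≤ R i ω) (hint : ∀ i, Integrable (R i) μ)
    (hindep : ProbabilityTheory.iIndepFun R μ)
    (hid : ∀ i j, ProbabilityTheory.IdentDistrib (R i) (R j) μ μ)
    (ρ : ℝ) (hρ : 0 ≤ ρ) (hp : 0 < (μ {ω | ρ ≤ R 1 ω}).toReal)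
    (η a : ℝ) (hη : 0 < η) (ha : 0 < a)
    (N : Ω → ℕ) (hN : ∀ ω, N ω = sInf {n | 1 ≤ n ∧ ρ ≤ R n ω}) :
    (∫ ω, R (N ω) ω ∂μ) / (η * ∫ ω, (N ω : ℝ) ∂μ + a) =
      (∫ ω in {ω | ρ ≤ R 1 ω}, R 1 ω ∂μ) /
        (η + a * (μ {ω | ρ ≤ R 1 ω}).toReal) := by
  classical
  set A : ℕ → Set Ω := fun n => R n ⁻¹' Set.Ici ρ with hA_def
  have hAmeas : ∀ n, MeasurableSet (A n) := fun n => (hmeas n) measurableSet_Ici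
  have hAeq : {ω | ρ ≤ R 1 ω} = A 1 := rfl
  set P : ℝ≥0∞ := μ (A 1) with hP_def
  have hAn : ∀ n, μ (A n) = P := fun n => (hid n 1).measure_mem_eq measurableSet_Ici
  set B : ℕ → Set Ω := fun n => R n ⁻¹' Set.Iio ρ with hB_def
  have hBmeas : ∀ n, MeasurableSet (B n) := fun n => (hmeas n) measurableSet_Iio
  have hBA : ∀ n, B n = (A n)ᶜ := by
    intro n; ext ω; simp [hA_def, hB_def, not_le]
  have hPle : P ≤ 1 := prob_le_one
  have hPtop : P ≠ ∞ := (lt_of_le_of_lt hPle ENNReal.one_lt_top).ne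
  set p : ℝ := P.toReal with hp_def
  have hp' : 0 < p := by rwa [hAeq] at hp
  have hP0 : P ≠ 0 := by
    intro h
    rw [hp_def, h] at hp'
    simp at hp'
  set Q : ℝ≥0∞ := 1 - P with hQ_def
  have hQtop : Q ≠ ∞ := by
    refine (lt_of_le_of_lt ?_ ENNReal.one_lt_top).ne
    exact tsub_le_self
  have hBn : ∀ n, μ (B n) = Q := by
    intro n
    rw [hBA n, prob_compl_eq_one_sub (hAmeas n), hAn n]
  have hQlt : Q < 1 := ENNReal.sub_lt_self ENNReal.one_ne_top one_ne_zero hP0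
  set q : ℝ := Q.toReal with hq_def
  have hq : q = 1 - p := by
    rw [hq_def, hQ_def, ENNReal.toReal_sub_of_le hPle ENNReal.one_ne_top, ENNReal.toReal_one]
  have hq0 : 0 ≤ q := ENNReal.toReal_nonneg
  have hp1 : p ≤ 1 := by
    rw [hp_def, ← ENNReal.toReal_one]
    exact ENNReal.toReal_mono ENNReal.one_ne_top hPle
  have hq1 : q < 1 := by rw [hq]; linarith
  have hQof : Q = ENNReal.ofReal q := (ENNReal.ofReal_toReal hQtop).symm
  have hPof : P = ENNReal.ofReal p := (ENNReal.ofReal_toReal hPtop).symm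
  -- the sets C n
  set C : ℕ → Set Ω := fun n => ⋂ k ∈ Finset.Icc 1 n, B k with hC_def
  have hCmeas : ∀ n, MeasurableSet (C n) :=
    fun n => MeasurableSet.biInter (Finset.Icc 1 n).countable_toSet fun k _ => hBmeas k
  have hμC : ∀ n, μ (C n) = Q ^ n := by
    intro n
    have h := hindep.meas_biInter (S := Finset.Icc 1 n) (s := fun k => B k)
      (fun k _ => ⟨Set.Iio ρ, measurableSet_Iio, rfl⟩)
    rw [hC_def]
    simp only [h]
    rw [Finset.prod_congr rfl fun k _ => hBn k, Finset.prod_const, Nat.card_Icc]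
    norm_num
  -- characterization of N
  have hNmem : ∀ (n : ℕ) (ω : Ω), N ω = n + 1 ↔ ω ∈ C n ∩ A (n + 1) := by
    intro n ω
    rw [hN ω]
    set S : Set ℕ := {m | 1 ≤ m ∧ ρ ≤ R m ω} with hS_def
    constructor
    · intro h
      have hne : S.Nonempty := by
        by_contra h'
        rw [Set.not_nonempty_iff_eq_empty] at h'
        rw [h', Nat.sInf_empty] at h
        omega
      have hmem := Nat.sInf_mem hne
      rw [h] at hmem
      refine ⟨?_, hmem.2⟩
      simp only [hC_def, Set.mem_iInter]
      intro k hk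
      simp only [Finset.mem_Icc] at hk
      by_contra hcon
      simp only [hB_def, Set.mem_preimage, Set.mem_Iio, not_lt] at hcon
      have : k ∈ S := ⟨hk.1, hcon⟩
      have := Nat.sInf_le this
      omega
    · rintro ⟨hC', hA'⟩
      have hmem : n + 1 ∈ S := ⟨by omega, hA'⟩
      refine le_antisymm (Nat.sInf_le hmem) ?_
      refine le_csInf ⟨_, hmem⟩ ?_
      intro m hm
      by_contra hcon
      push_neg at hcon
      have hm1 : 1 ≤ m := hm.1
      have hmn : m ≤ n := by omega
      have : ω ∈ B m := by
        have := Set.mem_iInter.1 hC' m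
        have := Set.mem_iInter.1 this
        exact this (Finset.mem_Icc.2 ⟨hm1, hmn⟩)
      simp only [hB_def, Set.mem_preimage, Set.mem_Iio] at this
      exact absurd hm.2 (not_le.2 this)
  have hNpre : ∀ n, N ⁻¹' {n + 1} = C n ∩ A (n + 1) := by
    intro n; ext ω
    simp only [Set.mem_preimage, Set.mem_singleton_iff]
    exact hNmem n ω
  -- N ⁻¹' {0} is null
  have hN0sub : ∀ n, N ⁻¹' {0} ⊆ C n := by
    intro n ω hω
    simp only [Set.mem_preimage, Set.mem_singleton_iff] at hω
    simp only [hC_def, Set.mem_iInter]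
    intro k hk
    simp only [Finset.mem_Icc] at hk
    by_contra hcon
    simp only [hB_def, Set.mem_preimage, Set.mem_Iio, not_lt] at hcon
    have hmem : k ∈ {m | 1 ≤ m ∧ ρ ≤ R m ω} := ⟨hk.1, hcon⟩
    have h1 := Nat.sInf_mem ⟨_, hmem⟩
    rw [hN ω] at hω
    rw [hω] at h1
    exact absurd h1.1 (by omega)
  have hN0 : μ (N ⁻¹' {0}) = 0 := by
    have hle : ∀ n, μ (N ⁻¹' {0}) ≤ Q ^ n := by
      intro n
      calc μ (N ⁻¹' {0}) ≤ μ (C n) := measure_mono (hN0sub n)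
        _ = Q ^ n := hμC n
    have htend := ENNReal.tendsto_pow_atTop_nhds_zero_of_lt_one hQlt
    have := le_of_tendsto_of_tendsto' (tendsto_const_nhds
      (x := μ (N ⁻¹' {0})) (f := Filter.atTop)) htend hle
    exact le_antisymm this zero_le
  -- measurability of N
  have hNmeas : Measurable N := by
    apply measurable_to_countable'
    intro n
    match n with
    | 0 =>
      have : N ⁻¹' {0} = (⋃ n, N ⁻¹' {n + 1})ᶜ := by
        ext ω
        simp only [Set.mem_preimage, Set.mem_singleton_iff, Set.mem_compl_iff, Set.mem_iUnion,
          not_exists]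
        constructor
        · intro h k hk; omega
        · intro h
          by_contra h0
          exact h (N ω - 1) (by omega)
      rw [this]
      exact (MeasurableSet.iUnion fun n => by
        rw [hNpre n]; exact (hCmeas n).inter (hAmeas (n + 1))).compl
    | n + 1 =>
      rw [hNpre n]
      exact (hCmeas n).inter (hAmeas (n + 1))
  have hNsets : ∀ n, MeasurableSet (N ⁻¹' {n}) := fun n => hNmeas (measurableSet_singleton n)
  have hdisj : Pairwise (Function.onFun Disjoint fun n => N ⁻¹' {n}) := by
    intro i j hij
    refine Set.disjoint_left.2 fun ω hi hj => hij ?_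
    simp only [Set.mem_preimage, Set.mem_singleton_iff] at hi hj
    rw [← hi, ← hj]
  have hcover : (⋃ n, N ⁻¹' {n}) = Set.univ := by
    ext ω; simp
  -- independence: measure of N ⁻¹' {n+1} and the integral of R over it
  set I : ℝ := ∫ ω in {ω | ρ ≤ R 1 ω}, R 1 ω ∂μ with hI_def
  have hI0 : 0 ≤ I := setIntegral_nonneg (hAmeas 1) fun ω _ => hR0 1 ω
  set g : ℝ → ℝ := fun x => if ρ ≤ x then x else 0 with hg_def
  have hg : Measurable g :=
    Measurable.ite (measurableSet_le measurable_const measurable_id) measurable_id measurable_const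
  have hgR1 : (∫ ω, g (R 1 ω) ∂μ) = I := by
    rw [hI_def, hAeq, ← integral_indicator (hAmeas 1)]
    refine integral_congr_ae (Filter.Eventually.of_forall fun ω => ?_)
    by_cases h : ρ ≤ R 1 ω <;>
      simp [Set.indicator_apply, hg_def, hA_def, Set.mem_preimage, Set.mem_Ici, h]
  have hkey : ∀ n : ℕ, μ (N ⁻¹' {n + 1}) = Q ^ n * P ∧
      (∫ ω in N ⁻¹' {n + 1}, R (n + 1) ω ∂μ) = q ^ n * I := by
    intro n
    have hmemT : n + 1 ∈ ({n + 1} : Finset ℕ) := Finset.mem_singleton_self _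
    set X : Ω → (Finset.Icc 1 n : Finset ℕ) → ℝ := fun ω k => R k ω with hX_def
    set Y : Ω → ({n + 1} : Finset ℕ) → ℝ := fun ω k => R k ω with hY_def
    have hST : Disjoint (Finset.Icc 1 n) ({n + 1} : Finset ℕ) := by
      simp [Finset.disjoint_singleton_right]
    have hXY : ProbabilityTheory.IndepFun X Y μ :=
      hindep.indepFun_finset (Finset.Icc 1 n) {n + 1} hST hmeas
    set U : Set ((Finset.Icc 1 n : Finset ℕ) → ℝ) := {v | ∀ k, v k < ρ} with hU_def
    have hU : MeasurableSet U := by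
      have : U = ⋂ k, (fun v : (Finset.Icc 1 n : Finset ℕ) → ℝ => v k) ⁻¹' Set.Iio ρ := by
        ext v; simp [hU_def]
      rw [this]
      exact MeasurableSet.iInter fun k => (measurable_pi_apply k) measurableSet_Iio
    set V : Set (({n + 1} : Finset ℕ) → ℝ) := {v | ρ ≤ v ⟨n + 1, hmemT⟩} with hV_def
    have hV : MeasurableSet V := by
      have : V = (fun v : ({n + 1} : Finset ℕ) → ℝ => v ⟨n + 1, hmemT⟩) ⁻¹' Set.Ici ρ := rfl
      rw [this]
      exact (measurable_pi_apply _) measurableSet_Ici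
    have hCU : C n = X ⁻¹' U := by
      ext ω
      simp only [hC_def, Set.mem_iInter, Set.mem_preimage, hU_def, Set.mem_setOf_eq, hX_def,
        hB_def, Set.mem_Iio, Subtype.forall, Finset.mem_Icc]
    have hAV : A (n + 1) = Y ⁻¹' V := rfl
    constructor
    · rw [hNpre n, hCU, hAV, hXY.measure_inter_preimage_eq_mul U V hU hV, ← hCU, ← hAV,
        hμC n, hAn]
    · -- integral computation
      set φ : ((Finset.Icc 1 n : Finset ℕ) → ℝ) → ℝ := U.indicator 1 with hφ_def
      have hφ : Measurable φ := measurable_const.indicator hU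
      set ψ : (({n + 1} : Finset ℕ) → ℝ) → ℝ := fun v => g (v ⟨n + 1, hmemT⟩) with hψ_def
      have hψ : Measurable ψ := hg.comp (measurable_pi_apply _)
      have hInd : ProbabilityTheory.IndepFun (φ ∘ X) (ψ ∘ Y) μ := hXY.comp hφ hψ
      have hmul := hInd.integral_mul_eq_mul_integral
        ((hφ.comp (measurable_pi_lambda X fun k => hmeas k)).aestronglyMeasurable)
        ((hψ.comp (measurable_pi_lambda Y fun k => hmeas k)).aestronglyMeasurable)
      have hφX : ∀ ω, (φ ∘ X) ω = (C n).indicator (1 : Ω → ℝ) ω := by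
        intro ω
        by_cases h : ω ∈ C n
        · have : X ω ∈ U := by rwa [hCU, Set.mem_preimage] at h
          simp [hφ_def, Function.comp, Set.indicator_of_mem this, Set.indicator_of_mem h]
        · have : X ω ∉ U := by rwa [hCU, Set.mem_preimage] at h
          simp [hφ_def, Function.comp, Set.indicator_of_notMem this, Set.indicator_of_notMem h]
      have hψY : ∀ ω, (ψ ∘ Y) ω = g (R (n + 1) ω) := fun ω => rfl
      have hLHS : (fun ω => (φ ∘ X) ω * (ψ ∘ Y) ω) =
          (N ⁻¹' {n + 1}).indicator (R (n + 1)) := by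
        funext ω
        rw [hφX, hψY, hNpre n]
        by_cases hC' : ω ∈ C n
        · by_cases hA' : ω ∈ A (n + 1)
          · have hmem : ω ∈ C n ∩ A (n + 1) := ⟨hC', hA'⟩
            have hge : ρ ≤ R (n + 1) ω := hA'
            rw [Set.indicator_of_mem hC', Set.indicator_of_mem hmem, hg_def]
            simp [hge]
          · have hnmem : ω ∉ C n ∩ A (n + 1) := fun h => hA' h.2
            have hge : ¬ ρ ≤ R (n + 1) ω := hA'
            rw [Set.indicator_of_mem hC', Set.indicator_of_notMem hnmem, hg_def]
            simp [hge]
        · have hnmem : ω ∉ C n ∩ A (n + 1) := fun h => hC' h.1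
          rw [Set.indicator_of_notMem hC', Set.indicator_of_notMem hnmem]
          simp
      have h1 : (∫ ω, (φ ∘ X) ω * (ψ ∘ Y) ω ∂μ) = ∫ ω in N ⁻¹' {n + 1}, R (n + 1) ω ∂μ := by
        rw [← integral_indicator (hNsets (n + 1))]
        exact integral_congr_ae (Filter.Eventually.of_forall fun ω => congrFun hLHS ω)
      have h2 : (∫ ω, (φ ∘ X) ω ∂μ) = q ^ n := by
        have : (fun ω => (φ ∘ X) ω) = (C n).indicator (1 : Ω → ℝ) := funext hφX
        rw [show (∫ ω, (φ ∘ X) ω ∂μ) = ∫ ω, (C n).indicator (1 : Ω → ℝ) ω ∂μ by rw [this]]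
        rw [integral_indicator_one (hCmeas n), measureReal_def, hμC n, ENNReal.toReal_pow]
      have h3 : (∫ ω, (ψ ∘ Y) ω ∂μ) = I := by
        rw [show (∫ ω, (ψ ∘ Y) ω ∂μ) = ∫ ω, g (R (n + 1) ω) ∂μ from rfl, ← hgR1]
        exact ((hid (n + 1) 1).comp hg).integral_eq
      calc (∫ ω in N ⁻¹' {n + 1}, R (n + 1) ω ∂μ)
          = (∫ ω, (φ ∘ X) ω * (ψ ∘ Y) ω ∂μ) := h1.symm
        _ = (∫ ω, (φ ∘ X) ω ∂μ) * ∫ ω, (ψ ∘ Y) ω ∂μ := hmul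
        _ = q ^ n * I := by rw [h2, h3]
  -- numerator
  have hmeasRN : Measurable fun ω => R (N ω) ω := by
    have h1 : Measurable (fun pr : Ω × ℕ => R pr.2 pr.1) :=
      measurable_from_prod_countable_left fun n => hmeas n
    exact h1.comp (measurable_id.prodMk hNmeas)
  have haesm : AEStronglyMeasurable (fun ω => R (N ω) ω) μ := hmeasRN.aestronglyMeasurable
  have hnum : (∫ ω, R (N ω) ω ∂μ) = p⁻¹ * I := by
    rw [integral_eq_lintegral_of_nonneg_ae (Filter.Eventually.of_forall fun ω => hR0 _ ω) haesm]
    rw [← setLIntegral_univ]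
    rw [← hcover]
    rw [lintegral_iUnion hNsets hdisj]
    rw [tsum_eq_zero_add' ENNReal.summable]
    rw [setLIntegral_measure_zero _ _ hN0, zero_add]
    have hterm : ∀ n : ℕ, (∫⁻ ω in N ⁻¹' {n + 1}, ENNReal.ofReal (R (N ω) ω) ∂μ)
        = ENNReal.ofReal (q ^ n * I) := by
      intro n
      have e1 : (∫⁻ ω in N ⁻¹' {n + 1}, ENNReal.ofReal (R (N ω) ω) ∂μ)
          = ∫⁻ ω in N ⁻¹' {n + 1}, ENNReal.ofReal (R (n + 1) ω) ∂μ :=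
        setLIntegral_congr_fun (hNsets (n + 1)) (fun ω hω => by
          rw [Set.mem_preimage, Set.mem_singleton_iff] at hω
          rw [hω])
      have e2 : ENNReal.ofReal (∫ ω in N ⁻¹' {n + 1}, R (n + 1) ω ∂μ)
          = ∫⁻ ω in N ⁻¹' {n + 1}, ENNReal.ofReal (R (n + 1) ω) ∂μ :=
        ofReal_integral_eq_lintegral_ofReal ((hint (n + 1)).restrict)
          (Filter.Eventually.of_forall fun ω => hR0 _ ω)
      rw [e1, ← e2, (hkey n).2]
    rw [tsum_congr hterm,
      ← ENNReal.ofReal_tsum_of_nonneg (fun n => mul_nonneg (pow_nonneg hq0 n) hI0)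
        ((summable_geometric_of_lt_one hq0 hq1).mul_right I),
      tsum_mul_right, tsum_geometric_of_lt_one hq0 hq1,
      ENNReal.toReal_ofReal (mul_nonneg (inv_nonneg.2 (by linarith)) hI0)]
    have : (1 - q)⁻¹ = p⁻¹ := by rw [hq]; ring_nf
    rw [this]
  -- denominator
  have hNcast : Measurable fun ω => (N ω : ℝ) := measurable_from_top.comp hNmeas
  have hden : (∫ ω, (N ω : ℝ) ∂μ) = p⁻¹ := by
    rw [integral_eq_lintegral_of_nonneg_ae
      (Filter.Eventually.of_forall fun ω => Nat.cast_nonneg _) hNcast.aestronglyMeasurable]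
    rw [← setLIntegral_univ, ← hcover, lintegral_iUnion hNsets hdisj,
      tsum_eq_zero_add' ENNReal.summable]
    rw [setLIntegral_measure_zero _ _ hN0, zero_add]
    have hterm : ∀ n : ℕ, (∫⁻ ω in N ⁻¹' {n + 1}, ENNReal.ofReal ((N ω : ℝ)) ∂μ)
        = ENNReal.ofReal (((n : ℝ) + 1) * (q ^ n * p)) := by
      intro n
      have e1 : (∫⁻ ω in N ⁻¹' {n + 1}, ENNReal.ofReal ((N ω : ℝ)) ∂μ)
          = ∫⁻ _ω in N ⁻¹' {n + 1}, ENNReal.ofReal ((n : ℝ) + 1) ∂μ :=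
        setLIntegral_congr_fun (hNsets (n + 1)) (fun ω hω => by
          rw [Set.mem_preimage, Set.mem_singleton_iff] at hω
          rw [hω]; norm_num)
      rw [e1, setLIntegral_const, (hkey n).1, hQof, hPof, ← ENNReal.ofReal_pow hq0,
        ← ENNReal.ofReal_mul (pow_nonneg hq0 n),
        ← ENNReal.ofReal_mul (by positivity : (0:ℝ) ≤ (n : ℝ) + 1)]
    rw [tsum_congr hterm]
    have hsum1 : Summable fun n : ℕ => (n : ℝ) * q ^ n := by
      have := summable_pow_mul_geometric_of_norm_lt_one (R := ℝ) 1 (r := q)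
        (by rw [Real.norm_eq_abs, abs_of_nonneg hq0]; exact hq1)
      simpa using this
    have hsum2 : Summable fun n : ℕ => q ^ n := summable_geometric_of_lt_one hq0 hq1
    have hsum : Summable fun n : ℕ => ((n : ℝ) + 1) * (q ^ n * p) := by
      refine ((hsum1.add hsum2).mul_right p).congr fun n => ?_
      ring
    rw [← ENNReal.ofReal_tsum_of_nonneg
      (fun n => by positivity) hsum]
    have hval : (∑' n : ℕ, ((n : ℝ) + 1) * (q ^ n * p)) = p⁻¹ := by
      have h1 : (∑' n : ℕ, ((n : ℝ) + 1) * (q ^ n * p))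
          = ((∑' n : ℕ, (n : ℝ) * q ^ n) + ∑' n : ℕ, q ^ n) * p := by
        rw [← Summable.tsum_add hsum1 hsum2, ← tsum_mul_right]
        exact tsum_congr fun n => by ring
      rw [h1, tsum_coe_mul_geometric_of_norm_lt_one
        (by rw [Real.norm_eq_abs, abs_of_nonneg hq0]; exact hq1),
        tsum_geometric_of_lt_one hq0 hq1]
      have hqp : 1 - q = p := by rw [hq]; ring
      rw [hqp, hq]
      field_simp [hp'.ne']
      ring
    rw [hval, ENNReal.toReal_ofReal (by positivity)]
  -- conclusion
  rw [hnum, hden, hAeq, ← hP_def, ← hp_def]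
  have hd1 : η * p⁻¹ + a ≠ 0 := by positivity
  have hd2 : η + a * p ≠ 0 := by positivity
  rw [div_eq_div_iff hd1 hd2]
  field_simp [hp'.ne']
end
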